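/- (Correctness of the reduction underlying Theorem 1.) Let (u_α, v_α)_{α∈[d]} be a Post correspondence instance over a finite alphabet Σ of size b ≥ 1, let λ ∈ ℚ, and let A^{(1)},…,A^{(d)} ∈ ℕ^{6×6}, L = e₆, R = e₁ − e₂ + e₃ − (λ+1)e₆ be the encoding matrices and boundary vectors of Lemma 1 (built from the numeric representation σ). Define the MPO tensor M by M^{(α,β)} := δ_{α,β} A^{(α)}. Then for every n ≥ 1: the operator ρ(L,M,R,n) + λ𝟙 on (ℚ^d)^{⊗n} is positive semidefinite if and only if there is no word w ∈ [d]^n with U(w) = V(w). -/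
import Mathlib


/-- The numeric representation `σ : Σ* → ℕ` associated with an enumeration
bijection `e : Σ ≃ Fin b` (so that `σ₀(a) = e(a) + 1 ∈ {1,…,b}`):
`σ(w) = Σ_{j=1}^{|w|} σ₀(w_j) · b^{|w|−j}`, with `σ(∅) = 0`. -/
def numRep {S : Type*} (b : ℕ) (e : S ≃ Fin b) (w : List S) : ℕ :=
  ∑ j : Fin w.length, ((e (w.get j) : ℕ) + 1) * b ^ (w.length - 1 - (j : ℕ))

/-- The 6×6 integer encoding matrix `A(u,v)` built from the numeric representation `σ`. -/
def encMat {S : Type*} (b : ℕ) (e : S ≃ Fin b) (u v : List S) :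
    Matrix (Fin 6) (Fin 6) ℤ :=
  !![(b : ℤ) ^ (2 * u.length), 0, 0, 0, 0, 0;
     0, (b : ℤ) ^ (u.length + v.length), 0, 0, 0, 0;
     0, 0, (b : ℤ) ^ (2 * v.length), 0, 0, 0;
     (numRep b e u : ℤ) * (b : ℤ) ^ u.length, (numRep b e v : ℤ) * (b : ℤ) ^ u.length, 0,
       (b : ℤ) ^ u.length, 0, 0;
     0, (numRep b e u : ℤ) * (b : ℤ) ^ v.length, (numRep b e v : ℤ) * (b : ℤ) ^ v.length, 0,
       (b : ℤ) ^ v.length, 0;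
     (numRep b e u : ℤ) ^ 2, 2 * (numRep b e u : ℤ) * (numRep b e v : ℤ), (numRep b e v : ℤ) ^ 2,
       2 * (numRep b e u : ℤ), 2 * (numRep b e v : ℤ), 1]

/-- The rational 6×6 encoding matrices `A^{(α)} = A(u_α, v_α)` of a PCP instance. -/
def encMatQ {S : Type*} (b : ℕ) (e : S ≃ Fin b) {d : ℕ} (u v : Fin d → List S)
    (α : Fin d) : Matrix (Fin 6) (Fin 6) ℚ :=
  (encMat b e (u α) (v α)).map (Int.cast : ℤ → ℚ)

/-- The boundary vector `L = e₆ ∈ ℚ⁶` (sixth standard basis vector). -/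
def bndL : Fin 6 → ℚ := Pi.single 5 1

/-- The boundary vector `R = e₁ − e₂ + e₃ − (λ+1)e₆ ∈ ℚ⁶`. -/
def bndR (lam : ℚ) : Fin 6 → ℚ :=
  (Pi.single 0 1 : Fin 6 → ℚ) - (Pi.single 1 1 : Fin 6 → ℚ)
    + (Pi.single 2 1 : Fin 6 → ℚ) - (lam + 1) • (Pi.single 5 1 : Fin 6 → ℚ)

/-- The translation-invariant matrix product operator `ρ(L,M,R,n)` on `(ℚ^d)^{⊗n}`
generated by the MPO tensor `M = (M^{(α,β)}_{i,j})` and boundary vectors `L, R ∈ ℚ^D`: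
`ρ(L,M,R,n) = Σ_{j ∈ [D]^{n+1}} L_{j₁} M_{j₁,j₂} ⊗ ⋯ ⊗ M_{j_n,j_{n+1}} R_{j_{n+1}}`,
written entrywise in the standard tensor-product basis of `(ℚ^d)^{⊗n}`. -/
def mpo {d D : ℕ} (L R : Fin D → ℚ) (M : Fin d → Fin d → Matrix (Fin D) (Fin D) ℚ)
    (n : ℕ) : Matrix (Fin n → Fin d) (Fin n → Fin d) ℚ :=
  fun a c => ∑ j : Fin (n + 1) → Fin D,
    L (j 0) * (∏ t : Fin n, M (a t) (c t) (j t.castSucc) (j t.succ)) * R (j (Fin.last n))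

/-- The diagonal MPO tensor `M^{(α,β)} = δ_{α,β} A^{(α)}` built from the encoding
matrices of a PCP instance. -/
def pcpTensor {S : Type*} (b : ℕ) (e : S ≃ Fin b) {d : ℕ} (u v : Fin d → List S)
    (α β : Fin d) : Matrix (Fin 6) (Fin 6) ℚ :=
  if α = β then encMatQ b e u v α else 0

theorem numRep_nil {S : Type*} (b : ℕ) (e : S ≃ Fin b) : numRep b e [] = 0 := by
  simp [numRep]

theorem numRep_cons {S : Type*} (b : ℕ) (e : S ≃ Fin b) (a : S) (w : List S) :
    numRep b e (a :: w) = ((e a : ℕ) + 1) * b ^ w.length + numRep b e w := by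
  rw [numRep]
  simp only [List.length_cons]
  rw [Fin.sum_univ_succ]
  simp only [numRep, List.get_eq_getElem]
  simp only [List.getElem_cons_succ, List.getElem_cons_zero, Fin.val_zero, Fin.val_succ]
  norm_num
  apply Finset.sum_congr rfl
  intro x _
  congr 2
  omega

theorem numRep_append {S : Type*} (b : ℕ) (e : S ≃ Fin b) (u w : List S) :
    numRep b e (u ++ w) = numRep b e u * b ^ w.length + numRep b e w := by
  induction u with
  | nil => simp [numRep_nil]
  | cons a u ih =>
      rw [List.cons_append, numRep_cons, ih, numRep_cons, List.length_append, pow_add]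
      ring

/-- minimal value of `numRep` on words of length `n` -/
def lowB (b n : ℕ) : ℕ := ∑ k ∈ Finset.range n, b ^ k

theorem lowB_succ (b n : ℕ) : lowB b (n + 1) = lowB b n + b ^ n := by
  simp [lowB, Finset.sum_range_succ]

theorem lowB_le_numRep {S : Type*} (b : ℕ) (e : S ≃ Fin b) (w : List S) :
    lowB b w.length ≤ numRep b e w := by
  induction w with
  | nil => simp [numRep_nil, lowB]
  | cons a w ih =>
      rw [numRep_cons, List.length_cons, lowB_succ]
      have : 1 * b ^ w.length ≤ ((e a : ℕ) + 1) * b ^ w.length :=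
        Nat.mul_le_mul_right _ (by omega)
      omega

theorem numRep_le_highB {S : Type*} (b : ℕ) (e : S ≃ Fin b) (w : List S) :
    numRep b e w ≤ b * lowB b w.length := by
  induction w with
  | nil => simp [numRep_nil]
  | cons a w ih =>
      rw [numRep_cons, List.length_cons, lowB_succ, Nat.mul_add]
      have h1 : ((e a : ℕ) + 1) * b ^ w.length ≤ b * b ^ w.length :=
        Nat.mul_le_mul_right _ (e a).isLt
      omega

theorem highB_lt (b n : ℕ) : b * lowB b n + 1 = lowB b (n + 1) := by
  induction n with
  | zero => simp [lowB]
  | succ n ih =>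
      rw [lowB_succ, Nat.mul_add, lowB_succ (b := b) (n := n + 1), ← ih, pow_succ]
      ring

theorem lowB_mono (b : ℕ) (hb : 1 ≤ b) : StrictMono (lowB b) := by
  apply strictMono_nat_of_lt_succ
  intro n
  have h1 : lowB b n ≤ b * lowB b n := Nat.le_mul_of_pos_left _ hb
  have := highB_lt b n
  omega

theorem numRep_length_eq {S : Type*} {b : ℕ} (hb : 1 ≤ b) (e : S ≃ Fin b)
    {x y : List S} (h : numRep b e x = numRep b e y) : x.length = y.length := by
  by_contra hne
  rcases Nat.lt_or_ge x.length y.length with hlt | hge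
  · have h1 := numRep_le_highB b e x
    have h2 := lowB_le_numRep b e y
    have h3 := highB_lt b x.length
    have h4 : lowB b (x.length + 1) ≤ lowB b y.length := (lowB_mono b hb).monotone hlt
    omega
  · have hlt : y.length < x.length := by omega
    have h1 := numRep_le_highB b e y
    have h2 := lowB_le_numRep b e x
    have h3 := highB_lt b y.length
    have h4 : lowB b (y.length + 1) ≤ lowB b x.length := (lowB_mono b hb).monotone hlt
    omega

theorem digit_aux {B X Y L da dc : ℕ} (hB : 1 ≤ B)
    (h : (da + 1) * B + X = (dc + 1) * B + Y)
    (hx1 : L ≤ X) (hx2 : X + 1 ≤ L + B) (hy1 : L ≤ Y) (hy2 : Y + 1 ≤ L + B) :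
    da = dc ∧ X = Y := by
  rcases Nat.lt_trichotomy da dc with hlt | heq | hgt
  · exfalso
    have h1 : (da + 1) * B + B ≤ (dc + 1) * B := by
      calc (da + 1) * B + B = (da + 2) * B := by ring
        _ ≤ (dc + 1) * B := Nat.mul_le_mul_right _ (by omega)
    omega
  · subst heq
    exact ⟨rfl, by omega⟩
  · exfalso
    have h1 : (dc + 1) * B + B ≤ (da + 1) * B := by
      calc (dc + 1) * B + B = (dc + 2) * B := by ring
        _ ≤ (da + 1) * B := Nat.mul_le_mul_right _ (by omega)
    omega

theorem numRep_injective {S : Type*} {b : ℕ} (hb : 1 ≤ b) (e : S ≃ Fin b)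
    {x y : List S} (h : numRep b e x = numRep b e y) : x = y := by
  induction x generalizing y with
  | nil =>
      have hl := numRep_length_eq hb e h
      exact (List.length_eq_zero_iff.mp hl.symm).symm
  | cons a x ih =>
      have hl := numRep_length_eq hb e h
      cases y with
      | nil => simp at hl
      | cons c y =>
          have hlen : x.length = y.length := by simpa using hl
          rw [numRep_cons, numRep_cons, ← hlen] at h
          have hx1 := lowB_le_numRep b e x
          have hx2 := numRep_le_highB b e x
          have hy1 := lowB_le_numRep b e y
          have hy2 := numRep_le_highB b e y
          rw [← hlen] at hy1 hy2
          have hB := highB_lt b x.length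
          have hLS := lowB_succ b x.length
          have hBpos : 1 ≤ b ^ x.length := Nat.one_le_pow _ _ hb
          obtain ⟨hd, hxy⟩ := digit_aux hBpos h hx1 (by omega) hy1 (by omega)
          have hac : a = c := e.injective (Fin.ext hd)
          subst hac
          rw [ih hxy]

theorem cons_val_five {α : Type*} {m : ℕ} (x : α) (u : Fin (m + 5) → α) :
    Matrix.vecCons x u 5 =
      Matrix.vecHead (Matrix.vecTail (Matrix.vecTail (Matrix.vecTail (Matrix.vecTail u)))) :=
  rfl

/-- The row vector `(s², 2st, t², 2s, 2t, 1)`. -/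
def rv (s t : ℚ) : Fin 6 → ℚ := ![s ^ 2, 2 * s * t, t ^ 2, 2 * s, 2 * t, 1]

theorem bndL_eq_rv : bndL = rv 0 0 := by
  funext j
  fin_cases j <;> simp [bndL, rv, Pi.single, cons_val_five]

theorem rv_vecMul {S : Type*} (b : ℕ) (e : S ≃ Fin b) {d : ℕ} (u v : Fin d → List S)
    (α : Fin d) (s t : ℚ) :
    Matrix.vecMul (rv s t) (encMatQ b e u v α) =
      rv (s * (b : ℚ) ^ (u α).length + (numRep b e (u α) : ℚ))
         (t * (b : ℚ) ^ (v α).length + (numRep b e (v α) : ℚ)) := by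
  funext j
  fin_cases j <;>
    · simp [Matrix.vecMul, dotProduct, encMatQ, encMat, rv, Fin.sum_univ_six,
        two_mul, pow_add, cons_val_five]
      try push_cast
      try ring

theorem rv_vecMul_prod {S : Type*} (b : ℕ) (e : S ≃ Fin b) {d : ℕ} (u v : Fin d → List S)
    (ws : List (Fin d)) (s t : ℚ) :
    Matrix.vecMul (rv s t) ((ws.map (encMatQ b e u v)).prod) =
      rv (s * (b : ℚ) ^ ((ws.map u).flatten).length + (numRep b e ((ws.map u).flatten) : ℚ))
         (t * (b : ℚ) ^ ((ws.map v).flatten).length + (numRep b e ((ws.map v).flatten) : ℚ)) := by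
  induction ws generalizing s t with
  | nil => simp [numRep_nil]
  | cons α ws ih =>
      rw [List.map_cons, List.prod_cons, ← Matrix.vecMul_vecMul, rv_vecMul, ih]
      simp only [List.map_cons, List.flatten_cons, numRep_append, List.length_append]
      push_cast
      congr 1 <;> ring


open Matrix in
theorem pathSum {D : ℕ} (n : ℕ) (L : Fin D → ℚ) (N : Fin n → Matrix (Fin D) (Fin D) ℚ)
    (R : Fin D → ℚ) :
    (∑ j : Fin (n + 1) → Fin D,
        L (j 0) * (∏ t : Fin n, N t (j t.castSucc) (j t.succ)) * R (j (Fin.last n)))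
      = Matrix.vecMul L (List.ofFn N).prod ⬝ᵥ R := by
  induction n generalizing L with
  | zero =>
      rw [← Equiv.sum_comp (Equiv.funUnique (Fin 1) (Fin D)).symm]
      simp [dotProduct]
  | succ n ih =>
      rw [← Equiv.sum_comp (Fin.consEquiv (fun _ : Fin (n + 2) => Fin D)),
        Fintype.sum_prod_type]
      have key : ∀ (k : Fin D) (j' : Fin (n + 1) → Fin D),
          L ((Fin.consEquiv (fun _ : Fin (n + 2) => Fin D)) (k, j') 0) *
            (∏ t : Fin (n + 1),
              N t ((Fin.consEquiv (fun _ : Fin (n + 2) => Fin D)) (k, j') t.castSucc)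
                ((Fin.consEquiv (fun _ : Fin (n + 2) => Fin D)) (k, j') t.succ)) *
            R ((Fin.consEquiv (fun _ : Fin (n + 2) => Fin D)) (k, j') (Fin.last (n + 1))) =
          (L k * N 0 k (j' 0)) *
            (∏ t : Fin n, Fin.tail N t (j' t.castSucc) (j' t.succ)) * R (j' (Fin.last n)) := by
        intro k j'
        simp only [Fin.consEquiv_apply, Fin.prod_univ_succ, Fin.castSucc_zero, Fin.cons_zero,
          Fin.cons_succ, ← Fin.succ_castSucc, ← Fin.succ_last, Fin.tail]
        ring
      simp only [key]
      have : ∀ j' : Fin (n + 1) → Fin D,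
          (∑ k : Fin D, (L k * N 0 k (j' 0)) *
            (∏ t : Fin n, Fin.tail N t (j' t.castSucc) (j' t.succ)) * R (j' (Fin.last n))) =
          Matrix.vecMul L (N 0) (j' 0) *
            (∏ t : Fin n, Fin.tail N t (j' t.castSucc) (j' t.succ)) * R (j' (Fin.last n)) := by
        intro j'
        rw [Matrix.vecMul, dotProduct, Finset.sum_mul, Finset.sum_mul]
      rw [Finset.sum_comm]
      simp only [this]
      rw [ih (Matrix.vecMul L (N 0)) (Fin.tail N), List.ofFn_succ, List.prod_cons,
        ← Matrix.vecMul_vecMul]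
      rfl


theorem rv_dot_bndR (lam s t : ℚ) :
    dotProduct (rv s t) (bndR lam) = (s - t) ^ 2 - (lam + 1) := by
  simp [dotProduct, rv, bndR, Fin.sum_univ_six, Pi.single, cons_val_five]
  ring

open Matrix in
theorem mpo_offdiag {S : Type*} (b : ℕ) (e : S ≃ Fin b) {d : ℕ} (u v : Fin d → List S)
    (lam : ℚ) (n : ℕ) {a c : Fin n → Fin d} (hac : a ≠ c) :
    mpo bndL (bndR lam) (pcpTensor b e u v) n a c = 0 := by
  obtain ⟨t, ht⟩ := Function.ne_iff.mp hac
  unfold mpo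
  apply Finset.sum_eq_zero
  intro j _
  have : (∏ t : Fin n, pcpTensor b e u v (a t) (c t) (j t.castSucc) (j t.succ)) = 0 := by
    apply Finset.prod_eq_zero (Finset.mem_univ t)
    simp [pcpTensor, ht]
  rw [this, mul_zero, zero_mul]

open Matrix in
theorem mpo_diag {S : Type*} (b : ℕ) (e : S ≃ Fin b) {d : ℕ} (u v : Fin d → List S)
    (lam : ℚ) (n : ℕ) (a : Fin n → Fin d) :
    mpo bndL (bndR lam) (pcpTensor b e u v) n a a =
      ((numRep b e ((List.ofFn a).map u).flatten : ℚ)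
        - (numRep b e ((List.ofFn a).map v).flatten : ℚ)) ^ 2 - (lam + 1) := by
  unfold mpo
  have hsummand : ∀ j : Fin (n + 1) → Fin 6,
      bndL (j 0) * (∏ t : Fin n, pcpTensor b e u v (a t) (a t) (j t.castSucc) (j t.succ)) *
          bndR lam (j (Fin.last n)) =
      bndL (j 0) *
          (∏ t : Fin n, encMatQ b e u v (a t) (j t.castSucc) (j t.succ)) *
          bndR lam (j (Fin.last n)) := by
    intro j
    simp [pcpTensor]
  rw [Finset.sum_congr rfl fun j _ => hsummand j]
  rw [pathSum n bndL (fun t => encMatQ b e u v (a t)) (bndR lam)]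
  have hofn : List.ofFn (fun t => encMatQ b e u v (a t)) =
      (List.ofFn a).map (encMatQ b e u v) := by
    rw [List.map_ofFn]
    rfl
  rw [hofn, bndL_eq_rv, rv_vecMul_prod, rv_dot_bndR]
  norm_num

open Matrix in
/-- Correctness of the reduction underlying Theorem 1: for the MPO built from the
Lemma-1 encoding of a PCP instance `(u_α, v_α)_{α∈[d]}` and threshold `λ ∈ ℚ`, and
for every system size `n ≥ 1`, the operator `ρ(L,M,R,n) + λ𝟙` on `(ℚ^d)^{⊗n}` is
positive semidefinite if and only if there is no word `w ∈ [d]^n` with `U(w) = V(w)`. -/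
theorem reduction_correct_bounded {S : Type*} {b d : ℕ} (hb : 1 ≤ b) (e : S ≃ Fin b)
    (u v : Fin d → List S) (lam : ℚ) (n : ℕ) (hn : 1 ≤ n) :
    (∀ x : (Fin n → Fin d) → ℚ,
        0 ≤ x ⬝ᵥ ((mpo bndL (bndR lam) (pcpTensor b e u v) n + lam • 1).mulVec x))
      ↔ ¬ ∃ w : Fin n → Fin d,
          ((List.ofFn w).map u).flatten = ((List.ofFn w).map v).flatten := by
  classical
  set SU : (Fin n → Fin d) → ℕ := fun a => numRep b e ((List.ofFn a).map u).flatten with hSU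
  set SV : (Fin n → Fin d) → ℕ := fun a => numRep b e ((List.ofFn a).map v).flatten with hSV
  have hentry : ∀ a c : Fin n → Fin d,
      (mpo bndL (bndR lam) (pcpTensor b e u v) n + lam • 1) a c =
        if a = c then ((SU a : ℚ) - SV a) ^ 2 - 1 else 0 := by
    intro a c
    by_cases hac : a = c
    · subst hac
      rw [Matrix.add_apply, mpo_diag b e u v lam n a, Matrix.smul_apply, Matrix.one_apply_eq,
        if_pos rfl, hSU, hSV, smul_eq_mul]
      ring
    · rw [Matrix.add_apply, mpo_offdiag b e u v lam n hac, Matrix.smul_apply,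
        Matrix.one_apply_ne hac, if_neg hac, smul_zero, add_zero]
  have hquad : ∀ x : (Fin n → Fin d) → ℚ,
      x ⬝ᵥ ((mpo bndL (bndR lam) (pcpTensor b e u v) n + lam • 1).mulVec x)
        = ∑ a : Fin n → Fin d, (((SU a : ℚ) - SV a) ^ 2 - 1) * x a ^ 2 := by
    intro x
    simp only [dotProduct, Matrix.mulVec, hentry, ite_mul, zero_mul,
      Finset.sum_ite_eq, Finset.mem_univ, if_true]
    apply Finset.sum_congr rfl
    intro a _
    ring
  constructor
  · intro h hex
    obtain ⟨w, hw⟩ := hex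
    have hΔ : (SU w : ℚ) = SV w := by
      rw [hSU, hSV]
      norm_cast
      exact congrArg (numRep b e) hw
    have h0 := h (Pi.single w 1)
    rw [hquad] at h0
    have hsum : (∑ a : Fin n → Fin d, (((SU a : ℚ) - SV a) ^ 2 - 1) * ((Pi.single w 1 : (Fin n → Fin d) → ℚ) a) ^ 2)
        = ((SU w : ℚ) - SV w) ^ 2 - 1 := by
      rw [Finset.sum_eq_single_of_mem w (Finset.mem_univ w)]
      · simp
      · intro c _ hcw
        rw [Pi.single_eq_of_ne hcw]
        ring
    rw [hsum, hΔ] at h0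
    norm_num at h0
  · intro h x
    rw [hquad]
    apply Finset.sum_nonneg
    intro a _
    apply mul_nonneg _ (sq_nonneg _)
    have hne : SU a ≠ SV a := by
      intro heq
      exact h ⟨a, numRep_injective hb e heq⟩
    have hz : ((SU a : ℤ) - SV a) ≠ 0 := by omega
    have h1 : (1 : ℤ) ≤ ((SU a : ℤ) - SV a) ^ 2 := by
      rcases hz.lt_or_gt with h' | h' <;> nlinarith
    have h2 : ((1 : ℤ) : ℚ) ≤ (((((SU a : ℤ) - SV a)) ^ 2 : ℤ) : ℚ) := Int.cast_le.mpr h1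
    push_cast at h2
    linarith
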